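/- Let α be an algebraic integer all of whose Galois conjugates (over ℚ) have complex absolute value 1. Then α is a root of unity. -/

import Mathlib

open Polynomial

/-- Kronecker's theorem: an algebraic integer all of whose conjugates have complex
absolute value `1` is a root of unity. -/
theorem kronecker_root_of_unity (α : ℂ) (hint : IsIntegral ℤ α)
    (hconj : ∀ x : ℂ, Polynomial.aeval x (minpoly ℤ α) = 0 → ‖x‖ = 1) :
    ∃ n : ℕ, 0 < n ∧ α ^ n = 1 := by
  have hQ : IsIntegral ℚ α := hint.tower_top
  let K := IntermediateField.adjoin ℚ ({α} : Set ℂ)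
  haveI : FiniteDimensional ℚ K := IntermediateField.adjoin.finiteDimensional hQ
  haveI : NumberField K := ⟨⟩
  set x : K := ⟨α, IntermediateField.subset_adjoin ℚ _ rfl⟩ with hx
  have hcoe : (algebraMap K ℂ) x = α := rfl
  have h0 : Polynomial.aeval x (minpoly ℤ α) = 0 := by
    have : (algebraMap K ℂ) (Polynomial.aeval x (minpoly ℤ α)) = 0 := by
      rw [← Polynomial.aeval_algebraMap_apply, hcoe, minpoly.aeval]
    exact (map_eq_zero_iff _ (algebraMap K ℂ).injective).mp this
  have hxi : IsIntegral ℤ x := ⟨minpoly ℤ α, minpoly.monic hint, h0⟩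
  have key : ∀ φ : K →+* ℂ, ‖φ x‖ = 1 := by
    intro φ
    apply hconj
    have := Polynomial.aeval_algHom_apply φ.toIntAlgHom x (minpoly ℤ α)
    rw [h0, map_zero] at this
    exact this
  obtain ⟨n, hn, h⟩ := NumberField.Embeddings.pow_eq_one_of_norm_eq_one K ℂ hxi key
  refine ⟨n, hn, ?_⟩
  have := congrArg (algebraMap K ℂ) h
  rwa [map_pow, hcoe, map_one] at this
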